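/- For every integer m ≥ 1, the integral over the circle group U(1) (with Haar probability measure) of ∏_{i=1}^m (x_i + x_i^{-1} + u + u^{-1}) du equals ∑_{ℓ=0}^{⌊m/2⌋} C(2ℓ, ℓ) · ∑_{1 ≤ i_1 < ⋯ < i_{m-2ℓ} ≤ m} ∏_{j=1}^{m-2ℓ} (x_{i_j} + x_{i_j}^{-1}), where the inner sum is 1 when m-2ℓ = 0. -/

import Mathlib

open Complex Real

-- Key orthogonality: ∫_0^{2π} exp(θ I)^n dθ = 2π if n = 0, else 0.
lemma int_exp_zpow (n : ℤ) :
    ∫ θ in (0:ℝ)..(2 * π), Complex.exp (θ * Complex.I) ^ n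
      = if n = 0 then (2 * π : ℂ) else 0 := by
  rcases eq_or_ne n 0 with h | h
  · simp [h, intervalIntegral.integral_const]
  · have h1 : ∀ θ : ℝ, Complex.exp (θ * Complex.I) ^ n
        = Complex.exp ((n * Complex.I) * θ) := by
      intro θ
      rw [← Complex.exp_int_mul]
      ring_nf
    simp_rw [h1]
    rw [integral_exp_mul_complex (by simp [h, Complex.I_ne_zero]), if_neg h]
    have h2 : Complex.exp ((n : ℂ) * Complex.I * (2 * (π : ℂ))) = 1 := by
      rw [show (n : ℂ) * Complex.I * (2 * π) = n * (2 * π * Complex.I) by ring,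
        Complex.exp_int_mul_two_pi_mul_I]
    simp [h2]

-- ∫_0^{2π} (u + u⁻¹)^k dθ = 2π * C(k, k/2) if k even, else 0.
lemma int_g_pow (k : ℕ) :
    ∫ θ in (0:ℝ)..(2 * π),
        (Complex.exp (θ * Complex.I) + (Complex.exp (θ * Complex.I))⁻¹) ^ k
      = if Even k then (2 * π * (k.choose (k / 2)) : ℂ) else 0 := by
  have expand : ∀ θ : ℝ,
      (Complex.exp (θ * Complex.I) + (Complex.exp (θ * Complex.I))⁻¹) ^ k
        = ∑ j ∈ Finset.range (k + 1),
            (k.choose j : ℂ) * Complex.exp (θ * Complex.I) ^ ((j : ℤ) - (k - j : ℕ)) := by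
    intro θ
    rw [add_pow]
    refine Finset.sum_congr rfl fun j hj => ?_
    have hu : Complex.exp (θ * Complex.I) ≠ 0 := Complex.exp_ne_zero _
    rw [zpow_sub₀ hu, zpow_natCast, zpow_natCast, inv_pow]
    ring
  simp_rw [expand]
  rw [intervalIntegral.integral_finset_sum]
  · have step : ∀ j ∈ Finset.range (k + 1),
        (∫ θ in (0:ℝ)..(2 * π),
          (k.choose j : ℂ) * Complex.exp (θ * Complex.I) ^ ((j : ℤ) - (k - j : ℕ)))
        = (k.choose j : ℂ) * (if ((j : ℤ) - (k - j : ℕ)) = 0 then (2 * π : ℂ) else 0) := by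
      intro j hj
      rw [intervalIntegral.integral_const_mul, int_exp_zpow]
    rw [Finset.sum_congr rfl step]
    by_cases hk : Even k
    · obtain ⟨l, hl⟩ := hk
      have hkl : k = 2 * l := by omega
      subst hkl
      rw [Finset.sum_eq_single l]
      · have e1 : 2 * l - l = l := by omega
        have e2 : 2 * l / 2 = l := by omega
        rw [e1, if_pos (sub_self (l : ℤ)), if_pos ⟨l, two_mul l⟩, e2]
        ring
      · intro j hj hne
        simp only [Finset.mem_range] at hj
        rw [if_neg (by omega), mul_zero]
      · intro h
        exact absurd (Finset.mem_range.mpr (by omega)) h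
    · rw [Nat.even_iff] at hk
      have z : ∀ j ∈ Finset.range (k + 1),
          (k.choose j : ℂ) * (if ((j : ℤ) - (k - j : ℕ)) = 0 then (2 * π : ℂ) else 0) = 0 := by
        intro j hj
        simp only [Finset.mem_range] at hj
        rw [if_neg (by omega), mul_zero]
      rw [Finset.sum_congr rfl z]
      simp [Nat.even_iff, hk]
  · intro j hj
    apply Continuous.intervalIntegrable
    have : Continuous fun θ : ℝ => Complex.exp (θ * Complex.I) ^ ((j : ℤ) - (k - j : ℕ)) := by
      apply Continuous.zpow₀ (by continuity)
      intro θ; left; exact Complex.exp_ne_zero _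
    exact continuous_const.mul this

/-- **Auto-correlation over `U(1)` (genus-one torus case).**
With `U(1)` parametrized as `u = exp(iθ)` and Haar probability measure `dθ/(2π)`
(so `∫ u^k du = δ(k=0)`), for every `m ≥ 1` and nonzero `x₁, …, x_m ∈ ℂ`:
`∫_{U(1)} ∏_{i=1}^m (x_i + x_i⁻¹ + u + u⁻¹) du
  = ∑_{ℓ=0}^{⌊m/2⌋} C(2ℓ,ℓ) ∑_{1≤i₁<⋯<i_{m-2ℓ}≤m} ∏_j (x_{i_j} + x_{i_j}⁻¹)`,
where the inner sum over subsets of size `m - 2ℓ` is `1` when `m - 2ℓ = 0`. -/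
theorem circle_autocorrelation_product (m : ℕ) (hm : 1 ≤ m)
    (x : Fin m → ℂ) (hx : ∀ i, x i ≠ 0) :
    (1 / (2 * (π : ℂ))) * ∫ θ in (0:ℝ)..(2 * π),
        ∏ i, (x i + (x i)⁻¹ + Complex.exp (θ * Complex.I)
              + (Complex.exp (θ * Complex.I))⁻¹)
      = ∑ ℓ ∈ Finset.range (m / 2 + 1), ((2 * ℓ).choose ℓ : ℂ) *
          ∑ s ∈ Finset.powersetCard (m - 2 * ℓ) (Finset.univ : Finset (Fin m)),
            ∏ i ∈ s, (x i + (x i)⁻¹) := by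
  set c : Fin m → ℂ := fun i => x i + (x i)⁻¹ with hc
  -- Step 1: expand the product
  have expand : ∀ θ : ℝ,
      ∏ i, (x i + (x i)⁻¹ + Complex.exp (θ * Complex.I)
            + (Complex.exp (θ * Complex.I))⁻¹)
      = ∑ t ∈ (Finset.univ : Finset (Fin m)).powerset,
          (∏ i ∈ t, c i) *
            (Complex.exp (θ * Complex.I) + (Complex.exp (θ * Complex.I))⁻¹) ^ (m - t.card) := by
    intro θ
    have : ∀ i : Fin m, x i + (x i)⁻¹ + Complex.exp (θ * Complex.I)
            + (Complex.exp (θ * Complex.I))⁻¹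
          = c i + (Complex.exp (θ * Complex.I) + (Complex.exp (θ * Complex.I))⁻¹) := by
      intro i; rw [hc]; ring
    simp_rw [this]
    rw [Finset.prod_add]
    refine Finset.sum_congr rfl fun t ht => ?_
    rw [Finset.prod_const]
    congr 1
    rw [Finset.card_sdiff, Finset.inter_univ, Finset.card_univ, Fintype.card_fin]
  simp_rw [expand]
  -- Step 2: swap integral and sum
  rw [intervalIntegral.integral_finset_sum]
  swap
  · intro t ht
    apply Continuous.intervalIntegrable
    have hg : Continuous fun θ : ℝ =>
        Complex.exp (θ * Complex.I) + (Complex.exp (θ * Complex.I))⁻¹ := by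
      have hexp : Continuous fun θ : ℝ => Complex.exp (θ * Complex.I) := by continuity
      exact hexp.add (hexp.inv₀ fun θ => Complex.exp_ne_zero _)
    exact continuous_const.mul (hg.pow _)
  -- Step 3: evaluate each integral
  have step : ∀ t ∈ (Finset.univ : Finset (Fin m)).powerset,
      (∫ θ in (0:ℝ)..(2 * π),
        (∏ i ∈ t, c i) *
          (Complex.exp (θ * Complex.I) + (Complex.exp (θ * Complex.I))⁻¹) ^ (m - t.card))
      = (∏ i ∈ t, c i) *
          (if Even (m - t.card) then (2 * π * ((m - t.card).choose ((m - t.card) / 2)) : ℂ) else 0) := by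
    intro t ht
    rw [intervalIntegral.integral_const_mul, int_g_pow]
  rw [Finset.sum_congr rfl step]
  -- Step 4: pull in the 1/(2π) factor
  rw [Finset.mul_sum]
  have hπ : (π : ℂ) ≠ 0 := by
    simpa using Complex.ofReal_ne_zero.mpr Real.pi_ne_zero
  have step2 : ∀ t ∈ (Finset.univ : Finset (Fin m)).powerset,
      (1 / (2 * (π : ℂ))) * ((∏ i ∈ t, c i) *
          (if Even (m - t.card) then (2 * π * ((m - t.card).choose ((m - t.card) / 2)) : ℂ) else 0))
      = (if Even (m - t.card) then (((m - t.card).choose ((m - t.card) / 2)) : ℂ) else 0)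
          * ∏ i ∈ t, c i := by
    intro t ht
    by_cases h : Even (m - t.card)
    · rw [if_pos h, if_pos h]
      field_simp
    · rw [if_neg h, if_neg h]
      ring
  rw [Finset.sum_congr rfl step2]
  -- Step 5: group by cardinality
  rw [Finset.powerset_card_biUnion, Finset.sum_biUnion
    ((Finset.pairwise_disjoint_powersetCard _).set_pairwise _), Finset.card_univ, Fintype.card_fin]
  have step3 : ∀ j ∈ Finset.range (m + 1),
      (∑ t ∈ Finset.powersetCard j (Finset.univ : Finset (Fin m)),
        (if Even (m - t.card) then (((m - t.card).choose ((m - t.card) / 2)) : ℂ) else 0)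
          * ∏ i ∈ t, c i)
      = (if Even (m - j) then (((m - j).choose ((m - j) / 2)) : ℂ) else 0)
          * ∑ t ∈ Finset.powersetCard j (Finset.univ : Finset (Fin m)), ∏ i ∈ t, c i := by
    intro j hj
    rw [Finset.mul_sum]
    refine Finset.sum_congr rfl fun t ht => ?_
    rw [(Finset.mem_powersetCard.mp ht).2]
  rw [Finset.sum_congr rfl step3]
  -- Step 6: reindex
  set F : ℕ → ℂ := fun j =>
      (if Even (m - j) then (((m - j).choose ((m - j) / 2)) : ℂ) else 0)
        * ∑ t ∈ Finset.powersetCard j (Finset.univ : Finset (Fin m)), ∏ i ∈ t, c i with hF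
  show ∑ j ∈ Finset.range (m + 1), F j = _
  have hR : ∀ ℓ ∈ Finset.range (m / 2 + 1),
      ((2 * ℓ).choose ℓ : ℂ) *
          ∑ s ∈ Finset.powersetCard (m - 2 * ℓ) (Finset.univ : Finset (Fin m)), ∏ i ∈ s, c i
      = F (m - 2 * ℓ) := by
    intro ℓ hℓ
    simp only [Finset.mem_range] at hℓ
    have e1 : m - (m - 2 * ℓ) = 2 * ℓ := by omega
    rw [hF]
    simp only
    rw [e1, if_pos ⟨ℓ, two_mul ℓ⟩, show 2 * ℓ / 2 = ℓ from by omega]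
  rw [show (∑ ℓ ∈ Finset.range (m / 2 + 1), ((2 * ℓ).choose ℓ : ℂ) *
          ∑ s ∈ Finset.powersetCard (m - 2 * ℓ) (Finset.univ : Finset (Fin m)), ∏ i ∈ s, c i)
      = ∑ ℓ ∈ Finset.range (m / 2 + 1), F (m - 2 * ℓ) from Finset.sum_congr rfl hR]
  have hinj : ∀ a ∈ Finset.range (m / 2 + 1), ∀ b ∈ Finset.range (m / 2 + 1),
      m - 2 * a = m - 2 * b → a = b := by
    intro a ha b hb hab
    simp only [Finset.mem_range] at ha hb
    omega
  rw [← Finset.sum_image hinj]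
  symm
  apply Finset.sum_subset
  · intro j hj
    obtain ⟨ℓ, hℓ, rfl⟩ := Finset.mem_image.mp hj
    exact Finset.mem_range.mpr (by omega)
  · intro j hj hnj
    have hodd : ¬ Even (m - j) := by
      intro hev
      obtain ⟨l, hl⟩ := hev
      simp only [Finset.mem_range] at hj
      exact hnj (Finset.mem_image.mpr ⟨l, Finset.mem_range.mpr (by omega), by omega⟩)
    rw [hF]
    simp only
    rw [if_neg hodd, zero_mul]
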